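/- Let k ≥ 2 be an even integer, n ≥ 3k an integer, and let S be a maximum independent set of P(n,k). If a 2k-segment I_t satisfies |I_t ∩ S| = 2k, then for every j with 1 ≤ j ≤ 2k the segment I_{t+j} satisfies |I_{t+j} ∩ S| ≤ 2k−1 (indices modulo n). -/

import Mathlib

namespace GP

/-- Adjacency generating relation for the generalized Petersen graph `P(n,k)`:
`Sum.inl i` is the outer vertex `u_i`, `Sum.inr i` is the inner vertex `v_i`. -/
def adjFun (n k : ℕ) : (ZMod n ⊕ ZMod n) → (ZMod n ⊕ ZMod n) → Prop
  | Sum.inl i, Sum.inl j => j = i + 1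
  | Sum.inl i, Sum.inr j => j = i
  | Sum.inr i, Sum.inr j => j = i + (k : ZMod n)
  | _, _ => False

/-- The generalized Petersen graph `P(n,k)`. -/
def P (n k : ℕ) : SimpleGraph (ZMod n ⊕ ZMod n) :=
  SimpleGraph.fromRel (adjFun n k)

/-- `s` is an independent set of vertices in `G`. -/
def IsIndep {V : Type*} (G : SimpleGraph V) (s : Finset V) : Prop :=
  ∀ v ∈ s, ∀ w ∈ s, ¬ G.Adj v w

/-- The independence number of a graph. -/
noncomputable def indepNum {V : Type*} (G : SimpleGraph V) : ℕ :=
  sSup {m | ∃ s : Finset V, IsIndep G s ∧ s.card = m}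

/-- `α(P(n,k))`. -/
noncomputable def alpha (n k : ℕ) : ℕ := indepNum (P n k)

/-- The outer vertex `u_i`. -/
def u (n : ℕ) (i : ZMod n) : ZMod n ⊕ ZMod n := Sum.inl i

/-- The inner vertex `v_i`. -/
def v (n : ℕ) (i : ZMod n) : ZMod n ⊕ ZMod n := Sum.inr i

/-- The `2k`-segment `I_t = {u_t, …, u_{t+2k-1}} ∪ {v_t, …, v_{t+2k-1}}`. -/
def segment (n k : ℕ) (t : ZMod n) : Finset (ZMod n ⊕ ZMod n) :=
  ((Finset.range (2*k)).image fun j : ℕ => u n (t + (j : ZMod n))) ∪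
  ((Finset.range (2*k)).image fun j : ℕ => v n (t + (j : ZMod n)))

/-! ### Auxiliary material -/

/-- The forced pattern of a full segment: column `i` holds an outer vertex of `S`
iff `pat k i` holds. -/
def pat (k i : ℕ) : Prop := (i < k ∧ i % 2 = 0) ∨ (k ≤ i ∧ i % 2 = 1)

lemma adj_uu (n k : ℕ) (hn : 2 ≤ n) (i : ZMod n) : (P n k).Adj (u n i) (u n (i+1)) := by
  haveI : Fact (1 < n) := ⟨by omega⟩
  refine (SimpleGraph.fromRel_adj _ _ _).mpr ⟨?_, Or.inl rfl⟩
  simp only [u, ne_eq, Sum.inl.injEq]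
  intro h
  have : (1 : ZMod n) = 0 := by
    have h2 : i + 1 = i + 0 := by rw [add_zero]; exact h.symm
    exact add_left_cancel h2
  exact one_ne_zero this

lemma adj_uv (n k : ℕ) (i : ZMod n) : (P n k).Adj (u n i) (v n i) :=
  (SimpleGraph.fromRel_adj _ _ _).mpr ⟨by simp [u, v], Or.inl rfl⟩

lemma adj_vv (n k : ℕ) (hk : 0 < k) (hkn : k < n) (i : ZMod n) :
    (P n k).Adj (v n i) (v n (i + (k : ZMod n))) := by
  haveI : NeZero n := ⟨by omega⟩
  refine (SimpleGraph.fromRel_adj _ _ _).mpr ⟨?_, Or.inl rfl⟩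
  simp only [v, ne_eq, Sum.inr.injEq]
  intro h
  have hz : (k : ZMod n) = 0 := by
    have h2 : i + (k : ZMod n) = i + 0 := by rw [add_zero]; exact h.symm
    exact add_left_cancel h2
  have := congrArg ZMod.val hz
  rw [ZMod.val_natCast_of_lt hkn, ZMod.val_zero] at this
  omega

lemma cast_inj_of_lt (n : ℕ) (hn : 0 < n) {a b : ℕ} (ha : a < n) (hb : b < n)
    (h : (a : ZMod n) = b) : a = b := by
  haveI : NeZero n := ⟨by omega⟩
  have := congrArg ZMod.val h
  rwa [ZMod.val_natCast_of_lt ha, ZMod.val_natCast_of_lt hb] at this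

lemma seg_split (n k : ℕ) (t : ZMod n) (S : Finset (ZMod n ⊕ ZMod n)) :
    segment n k t ∩ S =
      (Finset.range (2*k)).biUnion
        (fun i => ({u n (t + (i : ZMod n)), v n (t + (i : ZMod n))} : Finset _) ∩ S) := by
  ext x
  simp only [segment, Finset.mem_inter, Finset.mem_union, Finset.mem_image,
    Finset.mem_biUnion, Finset.mem_range, Finset.mem_insert, Finset.mem_singleton, eq_comm]
  aesop

lemma seg_card_eq (n k : ℕ) (hk : 2 ≤ k) (hn : 3 * k ≤ n) (t : ZMod n)
    (S : Finset (ZMod n ⊕ ZMod n)) :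
    (segment n k t ∩ S).card =
      ∑ i ∈ Finset.range (2*k),
        (({u n (t + (i : ZMod n)), v n (t + (i : ZMod n))} : Finset _) ∩ S).card := by
  rw [seg_split]
  refine Finset.card_biUnion ?_
  intro a ha b hb hab
  simp only [Finset.mem_coe, Finset.mem_range] at ha hb
  have hne : t + (a : ZMod n) ≠ t + (b : ZMod n) := by
    intro h
    exact hab (cast_inj_of_lt n (by omega) (by omega) (by omega) (add_left_cancel h))
  rw [Function.onFun, Finset.disjoint_left]
  intro x hx hx'
  simp only [Finset.mem_inter, Finset.mem_insert, Finset.mem_singleton, u, v] at hx hx'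
  rcases hx.1 with h1 | h1 <;> rcases hx'.1 with h2 | h2 <;> simp_all

lemma col_card_le (n k : ℕ) (S : Finset (ZMod n ⊕ ZMod n)) (hind : IsIndep (P n k) S)
    (x : ZMod n) : (({u n x, v n x} : Finset _) ∩ S).card ≤ 1 := by
  refine Finset.card_le_one.mpr ?_
  intro a ha b hb
  simp only [Finset.mem_inter, Finset.mem_insert, Finset.mem_singleton] at ha hb
  rcases ha.1 with h1 | h1 <;> rcases hb.1 with h2 | h2 <;> subst h1 <;> subst h2
  · rfl
  · exact absurd (adj_uv n k x) (hind _ ha.2 _ hb.2)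
  · exact absurd (adj_uv n k x).symm (hind _ ha.2 _ hb.2)
  · rfl

lemma seg_card_le (n k : ℕ) (hk : 2 ≤ k) (hn : 3 * k ≤ n)
    (S : Finset (ZMod n ⊕ ZMod n)) (hind : IsIndep (P n k) S) (t : ZMod n) :
    (segment n k t ∩ S).card ≤ 2 * k := by
  rw [seg_card_eq n k hk hn]
  calc ∑ i ∈ Finset.range (2*k),
        (({u n (t + (i : ZMod n)), v n (t + (i : ZMod n))} : Finset _) ∩ S).card
      ≤ (Finset.range (2*k)).card • 1 :=
        Finset.sum_le_card_nsmul _ _ 1 (fun i _ => col_card_le n k S hind _)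
    _ = 2 * k := by simp

lemma seg_struct (n k : ℕ) (hke : Even k) (hk : 2 ≤ k) (hn : 3 * k ≤ n)
    (S : Finset (ZMod n ⊕ ZMod n)) (hind : IsIndep (P n k) S)
    (t : ZMod n) (ht : (segment n k t ∩ S).card = 2 * k) :
    ∀ i : ℕ, i < 2 * k →
      ((u n (t + (i : ZMod n)) ∈ S) ↔ pat k i) ∧
      ((v n (t + (i : ZMod n)) ∈ S) ↔ ¬ pat k i) := by
  classical
  obtain ⟨r, hr⟩ := hke
  -- each column meets S in exactly one vertex
  have hone : ∀ i ∈ Finset.range (2*k),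
      (({u n (t + (i : ZMod n)), v n (t + (i : ZMod n))} : Finset _) ∩ S).card = 1 := by
    by_contra hc
    push_neg at hc
    obtain ⟨i0, hi0, hne⟩ := hc
    have hle : ∀ i ∈ Finset.range (2*k),
        (({u n (t + (i : ZMod n)), v n (t + (i : ZMod n))} : Finset _) ∩ S).card ≤ 1 :=
      fun i _ => col_card_le n k S hind _
    have h0 : (({u n (t + (i0 : ZMod n)), v n (t + (i0 : ZMod n))} : Finset _) ∩ S).card = 0 := by
      have := hle i0 hi0; omega
    have hsum := (seg_card_eq n k hk hn t S).symm.trans ht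
    rw [← Finset.sum_erase_add _ _ hi0, h0, add_zero] at hsum
    have hle2 : ∑ i ∈ (Finset.range (2*k)).erase i0,
        (({u n (t + (i : ZMod n)), v n (t + (i : ZMod n))} : Finset _) ∩ S).card
        ≤ ((Finset.range (2*k)).erase i0).card • 1 :=
      Finset.sum_le_card_nsmul _ _ 1 (fun i hi => hle i (Finset.mem_of_mem_erase hi))
    rw [Finset.card_erase_of_mem hi0, Finset.card_range] at hle2
    simp only [smul_eq_mul, mul_one] at hle2
    omega
  -- exactly one of u, v per column
  have hxor : ∀ i, i < 2*k →
      ((u n (t + (i : ZMod n)) ∈ S ∧ v n (t + (i : ZMod n)) ∉ S) ∨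
       (u n (t + (i : ZMod n)) ∉ S ∧ v n (t + (i : ZMod n)) ∈ S)) := by
    intro i hi
    obtain ⟨a, ha⟩ := Finset.card_eq_one.mp (hone i (Finset.mem_range.mpr hi))
    have hau : a ∈ ({u n (t + (i : ZMod n)), v n (t + (i : ZMod n))} : Finset _) ∩ S := by
      rw [ha]; exact Finset.mem_singleton_self a
    have huv : u n (t + (i : ZMod n)) ≠ v n (t + (i : ZMod n)) := by simp [u, v]
    simp only [Finset.mem_inter, Finset.mem_insert, Finset.mem_singleton] at hau
    rcases hau.1 with h1 | h1
    · refine Or.inl ⟨by rw [← h1]; exact hau.2, fun hv => ?_⟩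
      have hmem : v n (t + (i : ZMod n)) ∈
          ({u n (t + (i : ZMod n)), v n (t + (i : ZMod n))} : Finset _) ∩ S :=
        Finset.mem_inter.mpr ⟨by simp, hv⟩
      rw [ha, Finset.mem_singleton] at hmem
      exact huv (h1 ▸ hmem).symm
    · refine Or.inr ⟨fun hu => ?_, by rw [← h1]; exact hau.2⟩
      have hmem : u n (t + (i : ZMod n)) ∈
          ({u n (t + (i : ZMod n)), v n (t + (i : ZMod n))} : Finset _) ∩ S :=
        Finset.mem_inter.mpr ⟨by simp, hu⟩
      rw [ha, Finset.mem_singleton] at hmem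
      exact huv (h1 ▸ hmem)
  set b : ℕ → Prop := fun i => u n (t + (i : ZMod n)) ∈ S with hbdef
  -- no two consecutive outer vertices
  have h1 : ∀ i, i + 1 < 2*k → ¬ (b i ∧ b (i+1)) := by
    rintro i hi ⟨ha, hb2⟩
    have he : t + ((i+1 : ℕ) : ZMod n) = (t + (i : ZMod n)) + 1 := by push_cast; ring
    simp only [hbdef] at ha hb2
    rw [he] at hb2
    exact hind _ ha _ hb2 (adj_uu n k (by omega) _)
  -- each antipodal pair has an outer vertex
  have h2 : ∀ i, i < k → b i ∨ b (i + k) := by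
    intro i hi
    by_contra hc
    push_neg at hc
    have hv1 : v n (t + (i : ZMod n)) ∈ S := by
      rcases hxor i (by omega) with h | h
      · exact absurd h.1 hc.1
      · exact h.2
    have hv2 : v n (t + ((i + k : ℕ) : ZMod n)) ∈ S := by
      rcases hxor (i+k) (by omega) with h | h
      · exact absurd h.1 hc.2
      · exact h.2
    have he : t + ((i + k : ℕ) : ZMod n) = (t + (i : ZMod n)) + (k : ZMod n) := by
      push_cast; ring
    rw [he] at hv2
    exact hind _ hv1 _ hv2 (adj_vv n k (by omega) (by omega) _)
  -- counting
  set T : Finset ℕ := (Finset.range (2*k)).filter (fun i => b i) with hTdef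
  set F : Finset ℕ := (Finset.range (2*k)).filter (fun i => ¬ b i) with hFdef
  have hinjT : ∀ s' : Finset ℕ, (∀ i ∈ T, i / 2 ∈ s') → T.card ≤ s'.card := by
    intro s' hmap
    refine Finset.card_le_card_of_injOn (fun i => i / 2) hmap ?_
    intro i hi i' hi' hdiv
    have hdiv' : i / 2 = i' / 2 := hdiv
    simp only [hTdef, Finset.coe_filter, Set.mem_setOf_eq, Finset.mem_range] at hi hi'
    by_contra hne
    have : i' = i + 1 ∨ i = i' + 1 := by omega
    rcases this with h | h
    · exact h1 i (by omega) ⟨hi.2, h ▸ hi'.2⟩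
    · exact h1 i' (by omega) ⟨hi'.2, h ▸ hi.2⟩
  have hinjF : ∀ s' : Finset ℕ, (∀ i ∈ F, (if i < k then i else i - k) ∈ s') →
      F.card ≤ s'.card := by
    intro s' hmap
    refine Finset.card_le_card_of_injOn (fun i => if i < k then i else i - k) hmap ?_
    intro i hi i' hi' hfe0
    have hfe : (if i < k then i else i - k) = (if i' < k then i' else i' - k) := hfe0
    simp only [hFdef, Finset.coe_filter, Set.mem_setOf_eq, Finset.mem_range] at hi hi'
    by_cases hik : i < k <;> by_cases hik' : i' < k
    · rw [if_pos hik, if_pos hik'] at hfe; omega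
    · rw [if_pos hik, if_neg hik'] at hfe
      exfalso
      have hik2 : i' = i + k := by omega
      rcases h2 i (by omega) with h | h
      · exact hi.2 h
      · exact hi'.2 (by rw [hik2]; exact h)
    · rw [if_neg hik, if_pos hik'] at hfe
      exfalso
      have hik2 : i = i' + k := by omega
      rcases h2 i' (by omega) with h | h
      · exact hi'.2 h
      · exact hi.2 (by rw [hik2]; exact h)
    · rw [if_neg hik, if_neg hik'] at hfe; omega
  have hTle : T.card ≤ k := by
    refine le_trans (hinjT (Finset.range k) ?_) (by simp)
    intro i hi
    simp only [hTdef, Finset.mem_filter, Finset.mem_range] at hi ⊢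
    omega
  have hFle : F.card ≤ k := by
    refine le_trans (hinjF (Finset.range k) ?_) (by simp)
    intro i hi
    simp only [hFdef, Finset.mem_filter, Finset.mem_range] at hi ⊢
    split <;> omega
  have hTF : T.card + F.card = 2 * k := by
    have := Finset.card_filter_add_card_filter_not
      (s := Finset.range (2*k)) (p := fun i => b i)
    rw [Finset.card_range] at this
    exact this
  have hTcard : T.card = k := by omega
  have hFcard : F.card = k := by omega
  -- exactly one of b (2q), b (2q+1)
  have hpair1 : ∀ q, q < k → (b (2*q) ↔ ¬ b (2*q+1)) := by
    intro q hq
    constructor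
    · intro hb2 hb3
      exact h1 (2*q) (by omega) ⟨hb2, hb3⟩
    · intro hnb
      by_contra hnb2
      have hkk : T.card ≤ ((Finset.range k).erase q).card := by
        refine hinjT _ ?_
        intro i hi
        simp only [hTdef, Finset.mem_filter, Finset.mem_range] at hi
        simp only [Finset.mem_erase, Finset.mem_range]
        constructor
        · intro hdq
          have : i = 2*q ∨ i = 2*q+1 := by omega
          rcases this with h | h
          · exact hnb2 (h ▸ hi.2)
          · exact hnb (h ▸ hi.2)
        · omega
      rw [Finset.card_erase_of_mem (Finset.mem_range.mpr hq), Finset.card_range] at hkk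
      omega
  -- exactly one of b i, b (i+k)
  have hpair2 : ∀ i, i < k → (b i ↔ ¬ b (i + k)) := by
    intro i hik
    constructor
    · intro hbi hbk
      have hkk : F.card ≤ ((Finset.range k).erase i).card := by
        refine hinjF _ ?_
        intro j hj
        simp only [hFdef, Finset.mem_filter, Finset.mem_range] at hj
        simp only [Finset.mem_erase, Finset.mem_range]
        constructor
        · intro hji
          have : j = i ∨ j = i + k := by
            by_cases hjk : j < k
            · simp only [if_pos hjk] at hji; omega
            · simp only [if_neg hjk] at hji; omega
          rcases this with h | h
          · exact hj.2 (h ▸ hbi)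
          · exact hj.2 (h ▸ hbk)
        · split <;> omega
      rw [Finset.card_erase_of_mem (Finset.mem_range.mpr hik), Finset.card_range] at hkk
      omega
    · intro hnbk
      rcases h2 i hik with h | h
      · exact h
      · exact absurd h hnbk
  -- downward/upward propagation of falsity at even positions
  have hstep : ∀ i, i % 2 = 0 → i + 2 < 2*k → ¬ b i → ¬ b (i + 2) := by
    intro i h0 hlt hbi hb2
    obtain ⟨q, rfl⟩ : ∃ q, i = 2*q := ⟨i/2, by omega⟩
    have hb1 : b (2*q+1) := by
      by_contra hn1
      exact hbi ((hpair1 q (by omega)).mpr hn1)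
    refine h1 (2*q+1) (by omega) ⟨hb1, ?_⟩
    have : 2*q+1+1 = 2*q+2 := by omega
    rw [this]
    exact hb2
  have hup : ∀ m i, i % 2 = 0 → i + 2*m < 2*k → ¬ b i → ¬ b (i + 2*m) := by
    intro m
    induction m with
    | zero => intro i _ _ hbi; simpa using hbi
    | succ m ih =>
      intro i h0 hlt hbi
      have hs := hstep i h0 (by omega) hbi
      have := ih (i+2) (by omega) (by omega) hs
      have he : i + 2 + 2*m = i + 2*(m+1) := by ring
      rwa [he] at this
  -- the even pattern
  have hP1 : ∀ i, i % 2 = 0 → i < k → b i := by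
    intro i h0 hik
    by_contra hni
    have := hup r i h0 (by omega) hni
    rw [show i + 2*r = i + k by omega] at this
    exact hni ((hpair2 i hik).mpr this)
  have hbev : ∀ i, i < 2*k → i % 2 = 0 → (b i ↔ i < k) := by
    intro i hi h0
    constructor
    · intro hbi
      by_contra hik
      have hb' : b (i - k) := hP1 (i - k) (by omega) (by omega)
      have hnb := (hpair2 (i - k) (by omega)).mp hb'
      rw [show i - k + k = i by omega] at hnb
      exact hnb hbi
    · exact hP1 i h0
  intro i hi
  have hbfin : b i ↔ pat k i := by
    by_cases h0 : i % 2 = 0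
    · rw [hbev i hi h0]
      simp only [pat]
      omega
    · obtain ⟨q, rfl⟩ : ∃ q, i = 2*q + 1 := ⟨i/2, by omega⟩
      have hiff := hpair1 q (by omega)
      have hbq := hbev (2*q) (by omega) (by omega)
      have hpat : pat k (2*q+1) ↔ k ≤ 2*q := by unfold pat; omega
      rw [hpat]
      constructor
      · intro hb1
        by_contra hlt
        exact (hiff.mp (hbq.mpr (by omega))) hb1
      · intro hle
        by_contra hnb
        have hq2 := hbq.mp (hiff.mpr hnb)
        omega
  have hvfin : v n (t + (i : ZMod n)) ∈ S ↔ ¬ pat k i := by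
    rcases hxor i hi with h | h
    · have hp : pat k i := hbfin.mp h.1
      exact ⟨fun hv => absurd hv h.2, fun hnp => absurd hp hnp⟩
    · exact ⟨fun _ => fun hp => h.1 (hbfin.mpr hp), fun _ => h.2⟩
  exact ⟨hbfin, hvfin⟩

/-- If `S` is a maximum independent set of `P(n,k)` (`k ≥ 2` even, `n ≥ 3k`)
and `|I_t ∩ S| = 2k`, then `|I_{t+j} ∩ S| ≤ 2k − 1` for every `1 ≤ j ≤ 2k`. -/
theorem type1_spacing (n k : ℕ) (hke : Even k) (hk : 2 ≤ k) (hn : 3 * k ≤ n)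
    (S : Finset (ZMod n ⊕ ZMod n)) (hind : IsIndep (P n k) S) (hmax : S.card = alpha n k)
    (t : ZMod n) (ht : (segment n k t ∩ S).card = 2 * k) :
    ∀ j : ℕ, 1 ≤ j → j ≤ 2 * k →
      (segment n k (t + (j : ZMod n)) ∩ S).card ≤ 2 * k - 1 := by
  intro j hj1 hj2
  obtain ⟨r, hr⟩ := hke
  have hcle := seg_card_le n k hk hn S hind (t + (j : ZMod n))
  by_contra hcon
  push_neg at hcon
  have hceq : (segment n k (t + (j : ZMod n)) ∩ S).card = 2 * k := by omega
  have H1 := seg_struct n k ⟨r, hr⟩ hk hn S hind t ht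
  have H2 := seg_struct n k ⟨r, hr⟩ hk hn S hind (t + (j : ZMod n)) hceq
  by_cases hj : j = 2*k
  · -- disjoint case: consecutive outer vertices u_{t+2k-1}, u_{t+2k}
    have hu1 : u n (t + ((2*k-1 : ℕ) : ZMod n)) ∈ S :=
      (H1 (2*k-1) (by omega)).1.mpr (by unfold pat; omega)
    have hu2 : u n ((t + (j : ZMod n)) + ((0:ℕ) : ZMod n)) ∈ S :=
      (H2 0 (by omega)).1.mpr (by unfold pat; omega)
    have he : (t + (j : ZMod n)) + ((0:ℕ) : ZMod n) = (t + ((2*k-1 : ℕ) : ZMod n)) + 1 := by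
      subst hj
      push_cast [Nat.cast_sub (show 1 ≤ 2*k by omega)]
      ring
    rw [he] at hu2
    exact hind _ hu1 _ hu2 (adj_uu n k (by omega) _)
  · have hjlt : j < 2*k := by omega
    by_cases hpj : pat k j
    · by_cases hje : j % 2 = 0
      · -- j even, j < k: clash of u and v at column t+k
        have hjk : j < k := by simp only [pat] at hpj; omega
        have hv1 : v n (t + ((k:ℕ) : ZMod n)) ∈ S :=
          (H1 k (by omega)).2.mpr (by unfold pat; omega)
        have hu2 : u n ((t + (j : ZMod n)) + ((k - j : ℕ) : ZMod n)) ∈ S :=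
          (H2 (k-j) (by omega)).1.mpr (by unfold pat; omega)
        have he : (t + (j : ZMod n)) + ((k - j : ℕ) : ZMod n) = t + ((k:ℕ) : ZMod n) := by
          push_cast [Nat.cast_sub (le_of_lt hjk)]
          ring
        rw [he] at hu2
        exact hind _ hu2 _ hv1 (adj_uv n k _)
      · -- j odd, k ≤ j: inner edge v_{t+k} ~ v_{t+2k}
        have hkj : k ≤ j := by simp only [pat] at hpj; omega
        have hv1 : v n (t + ((k:ℕ) : ZMod n)) ∈ S :=
          (H1 k (by omega)).2.mpr (by unfold pat; omega)
        have hv2 : v n ((t + (j : ZMod n)) + ((2*k - j : ℕ) : ZMod n)) ∈ S :=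
          (H2 (2*k-j) (by omega)).2.mpr (by unfold pat; omega)
        have he : (t + (j : ZMod n)) + ((2*k - j : ℕ) : ZMod n)
            = (t + ((k:ℕ) : ZMod n)) + ((k:ℕ) : ZMod n) := by
          push_cast [Nat.cast_sub (show j ≤ 2*k by omega)]
          ring
        rw [he] at hv2
        exact hind _ hv1 _ hv2 (adj_vv n k (by omega) (by omega) _)
    · -- pattern clash at column t+j
      have hu2 : u n ((t + (j : ZMod n)) + ((0:ℕ) : ZMod n)) ∈ S :=
        (H2 0 (by omega)).1.mpr (by unfold pat; omega)
      have he : (t + (j : ZMod n)) + ((0:ℕ) : ZMod n) = t + (j : ZMod n) := by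
        push_cast; ring
      rw [he] at hu2
      exact hpj ((H1 j hjlt).1.mp hu2)

end GP
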